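/- Let d ≥ 1 be an integer. Every set A ⊆ ℤ that contains finite IP-sets of arbitrarily long lengths is a Poincaré recurrence set of order d. Consequently, a set A ⊆ ℤ is a Poincaré recurrence set of order d for every integer d ≥ 1 if and only if A contains finite IP-sets of arbitrarily long lengths. -/

import Mathlib

open scoped Classical
open MeasureTheory Filter Topology

noncomputable section

/-- Integer iterate of a bijection `T` of a set: `zIter T n = T^n`. -/
def zIter {X : Type*} (T : Equiv.Perm X) (n : ℤ) : X → X := ⇑(T ^ n)

/-- Integer iterate of a homeomorphism. -/
def hIter {X : Type*} [TopologicalSpace X] (T : X ≃ₜ X) (n : ℤ) : X → X :=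
  zIter T.toEquiv n

/-- The integer nearest to `a`, with ties broken towards the smaller integer.
This is the `⌈·⌉` of the paper. -/
def nearInt (a : ℝ) : ℤ := if a - (⌊a⌋ : ℝ) ≤ 1/2 then ⌊a⌋ else ⌈a⌉

/-- The distance from `a` to the nearest integer, i.e. `‖a‖` in the paper. -/
def distInt (a : ℝ) : ℝ := |a - (nearInt a : ℝ)|

/-- Generalized polynomials of degree at most `d` (for `d ≥ 1`):
`GP 1` is the smallest collection of functions `ℤ → ℝ` containing `n ↦ a n`
and closed under taking the nearest integer, scalar multiplication and finite sums;
`GP d` moreover contains every `GP e` for `e < d` and all functions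
`n ↦ a₀ n^{p₀} ⌈f₁(n)⌉ ⋯ ⌈f k (n)⌉` with `f l ∈ GP (p l)` and `p₀ + ∑ p l = d`. -/
inductive GP : ℕ → (ℤ → ℝ) → Prop
  | lin (a : ℝ) : GP 1 (fun n => a * n)
  | mono {d : ℕ} (hd : 1 ≤ d) (a₀ : ℝ) (p₀ : ℕ) {k : ℕ} (p : Fin k → ℕ)
      (f : Fin k → ℤ → ℝ) (hf : ∀ l, GP (p l) (f l)) (hsum : p₀ + ∑ l, p l = d) :
      GP d (fun n => a₀ * (n : ℝ) ^ p₀ * ∏ l, (nearInt (f l n) : ℝ))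
  | incl {d e : ℕ} (hed : e < d) {f : ℤ → ℝ} (hf : GP e f) : GP d f
  | ceil {d : ℕ} {f : ℤ → ℝ} (hf : GP d f) : GP d (fun n => (nearInt (f n) : ℝ))
  | smul {d : ℕ} (c : ℝ) {f : ℤ → ℝ} (hf : GP d f) : GP d (fun n => c * f n)
  | add {d : ℕ} {f g : ℤ → ℝ} (hf : GP d f) (hg : GP d g) : GP d (fun n => f n + g n)

/-- The bracket expression `L(a₁, …, a_ℓ) = a₁⌈L(a₂, …, a_ℓ)⌉`, `L(a) = a`. -/
def Lfun : List ℝ → ℝ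
  | [] => 0
  | [a] => a
  | a :: b :: rest => a * (nearInt (Lfun (b :: rest)) : ℝ)

/-- Special generalized polynomials of degree at most `d`:
the functions `n ↦ L(n^{j₁} a₁, …, n^{j_ℓ} a_ℓ)` with `1 ≤ ℓ`, `j t ≥ 1`, `∑ j t ≤ d`. -/
def SGP (d : ℕ) (g : ℤ → ℝ) : Prop :=
  ∃ ℓ : ℕ, 1 ≤ ℓ ∧ ∃ (a : Fin ℓ → ℝ) (j : Fin ℓ → ℕ),
    (∀ t, 1 ≤ j t) ∧ (∑ t, j t) ≤ d ∧
    g = fun n : ℤ => Lfun (List.ofFn fun t => (n : ℝ) ^ (j t) * a t)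

/-- `FS({n i}) = {n_{i₁} + ⋯ + n_{i_k} : i₁ < ⋯ < i_k}`, the set of finite sums. -/
def FS {d : ℕ} (n : Fin d → ℤ) : Set ℤ :=
  { m | ∃ I : Finset (Fin d), I.Nonempty ∧ m = ∑ i ∈ I, n i }

/-- `SG d P`: sums `p_{i₁} + ⋯ + p_{i_k}` over strictly increasing finite index
sequences whose consecutive gaps are at most `d` (infinite sequence `P`). -/
def SG (d : ℕ) (P : ℕ → ℤ) : Set ℤ :=
  { n | ∃ k : ℕ, ∃ i : Fin (k + 1) → ℕ, StrictMono i ∧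
      (∀ t : Fin k, i t.succ - i t.castSucc ≤ d) ∧ n = ∑ t, P (i t) }

/-- `SGfin d P` : the same for a finite sequence `P` of length `m`. -/
def SGfin (d : ℕ) {m : ℕ} (P : Fin m → ℤ) : Set ℤ :=
  { n | ∃ k : ℕ, ∃ i : Fin (k + 1) → Fin m, StrictMono i ∧
      (∀ t : Fin k, (i t.succ : ℕ) - (i t.castSucc : ℕ) ≤ d) ∧ n = ∑ t, P (i t) }

/-- A set of integers is syndetic if it has bounded gaps. -/
def Syndetic (A : Set ℤ) : Prop :=
  ∃ N : ℕ, ∀ i : ℤ, ∃ j, i ≤ j ∧ j ≤ i + N ∧ j ∈ A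

/-- `F` has positive upper Banach density. -/
def PosUpperBanachDensity (F : Set ℤ) : Prop :=
  ∃ δ : ℝ, 0 < δ ∧ ∀ N : ℕ, ∃ (a : ℤ) (L : ℕ), N ≤ L ∧ 1 ≤ L ∧
    δ * L ≤ ((Finset.Icc a (a + L - 1)).filter (fun x => x ∈ F)).card

/-- A set `A ⊆ ℤ` contains finite IP-sets of arbitrarily long lengths. -/
def ContainsArbLongFIP (A : Set ℤ) : Prop :=
  ∀ k : ℕ, 1 ≤ k → ∃ p : Fin k → ℤ, FS p ⊆ A

/-- A topological dynamical system `(X, T)` is minimal: every orbit is dense. -/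
def MinimalTDS {X : Type*} [TopologicalSpace X] (T : X ≃ₜ X) : Prop :=
  ∀ x : X, Dense (Set.range fun n : ℤ => hIter T n x)

/-- `Nset T x U = N(x, U) = {n ∈ ℤ : Tⁿ x ∈ U}`. -/
def Nset {X : Type*} [TopologicalSpace X] (T : X ≃ₜ X) (x : X) (U : Set X) : Set ℤ :=
  { n : ℤ | hIter T n x ∈ U }

/-- The regionally proximal relation of order `d`. -/
def RPd {X : Type*} [MetricSpace X] (T : X ≃ₜ X) (d : ℕ) (x y : X) : Prop :=
  ∀ δ : ℝ, 0 < δ → ∃ (x' y' : X) (n : Fin d → ℤ),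
    dist x x' < δ ∧ dist y y' < δ ∧
    ∀ ε : Finset (Fin d), ε.Nonempty →
      dist (hIter T (∑ i ∈ ε, n i) x') (hIter T (∑ i ∈ ε, n i) y') < δ

/-- `S` is a set of `d`-topological recurrence. -/
def TopRecSet (d : ℕ) (S : Set ℤ) : Prop :=
  ∀ (X : Type) [MetricSpace X] [CompactSpace X] (T : X ≃ₜ X), MinimalTDS T →
    ∀ U : Set X, IsOpen U → U.Nonempty →
      ∃ n ∈ S, (⋂ j ∈ Finset.range (d + 1), hIter T ((j : ℤ) * n) ⁻¹' U).Nonempty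

/-- `S` is a set of `d`-recurrence (measurable recurrence). -/
def MeasRecSet (d : ℕ) (S : Set ℤ) : Prop :=
  ∀ (Y : Type) [MeasurableSpace Y] [StandardBorelSpace Y]
    (μ : Measure Y) [IsProbabilityMeasure μ] (T : Y ≃ᵐ Y),
    MeasurePreserving (⇑T) μ μ →
    ∀ A : Set Y, MeasurableSet A → 0 < μ A →
      ∃ n ∈ S, 0 < μ (⋂ j ∈ Finset.range (d + 1), zIter T.toEquiv ((j : ℤ) * n) ⁻¹' A)

/-- `P` is a Birkhoff recurrence set of order `d`. -/
def BirkhoffRecSet (d : ℕ) (P : Set ℤ) : Prop :=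
  ∀ (X : Type) [MetricSpace X] [CompactSpace X] (T : X ≃ₜ X), MinimalTDS T →
    ∀ U : Set X, IsOpen U → U.Nonempty →
      ∃ n : Fin d → ℤ, FS n ⊆ P ∧ (U ∩ ⋂ m ∈ FS n, hIter T m ⁻¹' U).Nonempty

/-- `F` is a Poincaré recurrence set of order `d`. -/
def PoincareRecSet (d : ℕ) (F : Set ℤ) : Prop :=
  ∀ (Y : Type) [MeasurableSpace Y] [StandardBorelSpace Y]
    (μ : Measure Y) [IsProbabilityMeasure μ] (T : Y ≃ᵐ Y),
    MeasurePreserving (⇑T) μ μ →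
    ∀ A : Set Y, MeasurableSet A → 0 < μ A →
      ∃ n : Fin d → ℤ, FS n ⊆ F ∧ 0 < μ (A ∩ ⋂ m ∈ FS n, zIter T.toEquiv m ⁻¹' A)

/-- The upper unitriangular matrix `M(a)` with entries `(M(a))_{i, i+k} = a i k`
(1-based indexing). -/
def Mmat (d : ℕ) (a : ℕ → ℕ → ℝ) : Matrix (Fin (d + 1)) (Fin (d + 1)) ℝ :=
  fun r c =>
    if (r : ℕ) = (c : ℕ) then 1
    else if (r : ℕ) < (c : ℕ) then a ((r : ℕ) + 1) ((c : ℕ) - (r : ℕ)) else 0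

/-- `P_ℓ(a; i, k) = ∑ a_i^{s₁} a_{i+s₁}^{s₂} ⋯`, sum over `(s₁,…,s_ℓ) ∈ {1,…,k}^ℓ`
with `s₁ + ⋯ + s_ℓ = k`. -/
def Ppoly (a : ℕ → ℕ → ℝ) (i k ℓ : ℕ) : ℝ :=
  ∑ s ∈ Finset.univ.filter (fun s : Fin ℓ → Fin k => (∑ t, ((s t : ℕ) + 1)) = k),
    ∏ t : Fin ℓ,
      a (i + ∑ u ∈ Finset.univ.filter (fun u : Fin ℓ => u < t), ((s u : ℕ) + 1))
        ((s t : ℕ) + 1)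

/-- The upper unitriangular matrix with superdiagonal `α₁, …, α_d` (1-based). -/
def Amat (d : ℕ) (α : ℕ → ℝ) : Matrix (Fin (d + 1)) (Fin (d + 1)) ℝ :=
  fun r c =>
    if (r : ℕ) = (c : ℕ) then 1
    else if (c : ℕ) = (r : ℕ) + 1 then α ((r : ℕ) + 1) else 0

end

open scoped ENNReal

lemma zIter_add {Y : Type*} (T : Equiv.Perm Y) (m n : ℤ) :
    zIter T (m + n) = zIter T m ∘ zIter T n := by
  simp [zIter, zpow_add]

lemma zIter_measurable {Y : Type*} [MeasurableSpace Y] (T : Y ≃ᵐ Y) (m : ℤ) :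
    Measurable (zIter T.toEquiv m) := by
  induction m using Int.induction_on with
  | zero => simpa [zIter] using measurable_id
  | succ n ih =>
      have h : (T.toEquiv ^ ((n : ℤ) + 1)) = T.toEquiv ^ (n : ℤ) * T.toEquiv := by
        rw [zpow_add_one]
      have : zIter T.toEquiv ((n : ℤ) + 1) = zIter T.toEquiv n ∘ ⇑T := by
        simp [zIter, h]
      rw [this]; exact ih.comp T.measurable
  | pred n ih =>
      have h : (T.toEquiv ^ (-(n : ℤ) - 1)) = T.toEquiv ^ (-(n : ℤ)) * T.toEquiv⁻¹ := by
        rw [zpow_sub_one]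
      have : zIter T.toEquiv (-(n : ℤ) - 1) = zIter T.toEquiv (-(n : ℤ)) ∘ ⇑T.symm := by
        simp [zIter, h]
      rw [this]; exact ih.comp T.symm.measurable

lemma zIter_mp {Y : Type*} [MeasurableSpace Y] {μ : Measure Y} (T : Y ≃ᵐ Y)
    (hT : MeasurePreserving (⇑T) μ μ) (m : ℤ) :
    MeasurePreserving (zIter T.toEquiv m) μ μ := by
  induction m using Int.induction_on with
  | zero => simpa [zIter] using MeasurePreserving.id μ
  | succ n ih =>
      have h : (T.toEquiv ^ ((n : ℤ) + 1)) = T.toEquiv ^ (n : ℤ) * T.toEquiv := by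
        rw [zpow_add_one]
      have : zIter T.toEquiv ((n : ℤ) + 1) = zIter T.toEquiv n ∘ ⇑T := by
        simp [zIter, h]
      rw [this]; exact ih.comp hT
  | pred n ih =>
      have h : (T.toEquiv ^ (-(n : ℤ) - 1)) = T.toEquiv ^ (-(n : ℤ)) * T.toEquiv⁻¹ := by
        rw [zpow_sub_one]
      have : zIter T.toEquiv (-(n : ℤ) - 1) = zIter T.toEquiv (-(n : ℤ)) ∘ ⇑T.symm := by
        simp [zIter, h]
      rw [this]; exact ih.comp (hT.symm T)

lemma bonferroni {Y ι : Type*} [MeasurableSpace Y] (μ : Measure Y) (B : ι → Set Y)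
    (hB : ∀ i, MeasurableSet (B i)) (s : Finset ι) [DecidableEq ι] :
    ∑ j ∈ s, μ (B j) ≤ μ (⋃ j ∈ s, B j) + ∑ q ∈ s.offDiag, μ (B q.1 ∩ B q.2) := by
  classical
  induction s using Finset.induction_on with
  | empty => simp
  | @insert a s ha ih =>
      set U : Set Y := ⋃ j ∈ s, B j with hU
      have hUm : MeasurableSet U := s.measurableSet_biUnion (fun i _ => hB i)
      have key : μ (B a) + μ U = μ (B a ∪ U) + μ (B a ∩ U) :=
        (measure_union_add_inter (B a) hUm).symm
      have hcap : μ (B a ∩ U) ≤ ∑ j ∈ s, μ (B a ∩ B j) := by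
        have : B a ∩ U = ⋃ j ∈ s, (B a ∩ B j) := by
          rw [hU, Set.inter_iUnion₂]
        rw [this]
        exact measure_biUnion_finset_le s _
      have hsub : s.offDiag ∪ {a} ×ˢ s ⊆ (insert a s).offDiag := by
        intro q hq
        rcases Finset.mem_union.mp hq with h | h
        · rcases Finset.mem_offDiag.mp h with ⟨h1, h2, h3⟩
          exact Finset.mem_offDiag.mpr ⟨Finset.mem_insert_of_mem h1,
            Finset.mem_insert_of_mem h2, h3⟩
        · rcases Finset.mem_product.mp h with ⟨h1, h2⟩
          have h1' : q.1 = a := Finset.mem_singleton.mp h1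
          refine Finset.mem_offDiag.mpr ⟨?_, Finset.mem_insert_of_mem h2, ?_⟩
          · rw [h1']; exact Finset.mem_insert_self a s
          · rw [h1']; rintro rfl; exact ha h2
      have hdisj : Disjoint s.offDiag ({a} ×ˢ s) := by
        rw [Finset.disjoint_left]
        intro q hq hq'
        rcases Finset.mem_offDiag.mp hq with ⟨h1, _, _⟩
        rcases Finset.mem_product.mp hq' with ⟨h1', _⟩
        exact ha (by rwa [Finset.mem_singleton.mp h1'] at h1)
      have hsum2 : ∑ q ∈ s.offDiag, μ (B q.1 ∩ B q.2) + ∑ j ∈ s, μ (B a ∩ B j)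
          ≤ ∑ q ∈ (insert a s).offDiag, μ (B q.1 ∩ B q.2) := by
        have e1 : ∑ q ∈ ({a} ×ˢ s), μ (B q.1 ∩ B q.2) = ∑ j ∈ s, μ (B a ∩ B j) := by
          rw [Finset.sum_product, Finset.sum_singleton]
        calc ∑ q ∈ s.offDiag, μ (B q.1 ∩ B q.2) + ∑ j ∈ s, μ (B a ∩ B j)
            = ∑ q ∈ (s.offDiag ∪ {a} ×ˢ s), μ (B q.1 ∩ B q.2) := by
              rw [Finset.sum_union hdisj, e1]
          _ ≤ _ := Finset.sum_le_sum_of_subset hsub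
      rw [Finset.sum_insert ha]
      have hbU : B a ∪ U = ⋃ j ∈ insert a s, B j := by
        simp [hU, Set.biUnion_insert]
      calc μ (B a) + ∑ j ∈ s, μ (B j)
          ≤ μ (B a) + (μ U + ∑ q ∈ s.offDiag, μ (B q.1 ∩ B q.2)) := by
            exact add_le_add le_rfl ih
        _ = (μ (B a) + μ U) + ∑ q ∈ s.offDiag, μ (B q.1 ∩ B q.2) := by ring
        _ = (μ (B a ∪ U) + μ (B a ∩ U)) + ∑ q ∈ s.offDiag, μ (B q.1 ∩ B q.2) := by rw [key]
        _ ≤ μ (B a ∪ U) + (∑ j ∈ s, μ (B a ∩ B j) + ∑ q ∈ s.offDiag, μ (B q.1 ∩ B q.2)) := by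
            rw [← add_assoc]
            exact add_le_add (add_le_add le_rfl hcap) le_rfl
        _ ≤ μ (⋃ j ∈ insert a s, B j) + ∑ q ∈ (insert a s).offDiag, μ (B q.1 ∩ B q.2) := by
            rw [hbU]
            refine add_le_add le_rfl ?_
            rw [add_comm]
            exact hsum2

lemma pair_lemma {Y : Type*} [MeasurableSpace Y] (μ : Measure Y) [IsProbabilityMeasure μ]
    {M : ℕ} (B : Fin M → Set Y) (hB : ∀ i, MeasurableSet (B i)) {c : ℝ≥0∞}
    (hc : ∀ j, c ≤ μ (B j)) (h2 : 2 < (M : ℝ≥0∞) * c) :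
    ∃ i j : Fin M, i < j ∧ ((M : ℝ≥0∞) * M)⁻¹ < μ (B i ∩ B j) := by
  classical
  by_contra hcon
  push_neg at hcon
  have hM0 : (M : ℝ≥0∞) ≠ 0 := by
    rintro h; rw [h, zero_mul] at h2; exact (not_lt.mpr zero_le) h2
  set ε : ℝ≥0∞ := ((M : ℝ≥0∞) * M)⁻¹ with hε
  have hall : ∀ q ∈ (Finset.univ : Finset (Fin M)).offDiag, μ (B q.1 ∩ B q.2) ≤ ε := by
    rintro ⟨i, j⟩ hq
    have hne : i ≠ j := (Finset.mem_offDiag.mp hq).2.2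
    rcases lt_or_gt_of_ne hne with h | h
    · exact hcon i j h
    · rw [Set.inter_comm]; exact hcon j i h
  have hsum : ∑ q ∈ (Finset.univ : Finset (Fin M)).offDiag, μ (B q.1 ∩ B q.2) ≤ 1 := by
    calc ∑ q ∈ (Finset.univ : Finset (Fin M)).offDiag, μ (B q.1 ∩ B q.2)
        ≤ (Finset.univ : Finset (Fin M)).offDiag.card • ε :=
          Finset.sum_le_card_nsmul _ _ ε hall
      _ = ((Finset.univ : Finset (Fin M)).offDiag.card : ℝ≥0∞) * ε := by
          rw [nsmul_eq_mul]
      _ ≤ ((M : ℝ≥0∞) * M) * ε := by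
          apply mul_le_mul_left
          have : (Finset.univ : Finset (Fin M)).offDiag.card ≤ M * M := by
            calc (Finset.univ : Finset (Fin M)).offDiag.card
                ≤ ((Finset.univ : Finset (Fin M)) ×ˢ Finset.univ).card :=
                  Finset.card_le_card (by intro q hq; simp)
              _ = M * M := by simp [Finset.card_product]
          exact_mod_cast Nat.cast_le.mpr this
      _ = 1 := by
          rw [hε, ENNReal.mul_inv_cancel (by simpa using hM0) (by finiteness)]
  have hlb : (M : ℝ≥0∞) * c ≤ ∑ j : Fin M, μ (B j) := by
    calc (M : ℝ≥0∞) * c = (Finset.univ : Finset (Fin M)).card • c := by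
          simp [nsmul_eq_mul]
      _ ≤ ∑ j : Fin M, μ (B j) := Finset.card_nsmul_le_sum _ _ _ (fun j _ => hc j)
  have := calc (2 : ℝ≥0∞) < (M : ℝ≥0∞) * c := h2
    _ ≤ ∑ j : Fin M, μ (B j) := hlb
    _ ≤ μ (⋃ j ∈ Finset.univ, B j) + ∑ q ∈ (Finset.univ : Finset (Fin M)).offDiag,
          μ (B q.1 ∩ B q.2) := bonferroni μ B hB Finset.univ
    _ ≤ 1 + 1 := add_le_add prob_le_one hsum
    _ = 2 := by norm_num
  exact lt_irrefl _ this

lemma FS_zero (n : Fin 0 → ℤ) : FS n = ∅ := by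
  ext m
  simp only [FS, Set.mem_setOf_eq, Set.mem_empty_iff_false, iff_false]
  rintro ⟨I, ⟨i, _⟩, _⟩
  exact i.elim0

lemma sum_succ_of_not_mem_zero {t : ℕ} (n₁ : ℤ) (n : Fin t → ℤ)
    (I : Finset (Fin (t + 1))) (h0 : (0 : Fin (t+1)) ∉ I) :
    ∃ J : Finset (Fin t), (I.Nonempty → J.Nonempty) ∧
      ∑ i ∈ I, (Fin.cons n₁ n) i = ∑ j ∈ J, n j := by
  classical
  refine ⟨I.preimage Fin.succ (Fin.succ_injective t).injOn, ?_, ?_⟩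
  · rintro ⟨i, hi⟩
    have hne : i ≠ 0 := by rintro rfl; exact h0 hi
    obtain ⟨j, hj⟩ := Fin.exists_succ_eq.mpr hne
    exact ⟨j, Finset.mem_preimage.mpr (by rwa [hj])⟩
  · rw [← Finset.sum_preimage Fin.succ I (Fin.succ_injective t).injOn
      (fun i => (Fin.cons n₁ n) i) ?_]
    · exact Finset.sum_congr rfl (fun j _ => by simp)
    · intro x hx hr
      exfalso
      apply hr
      have hne : x ≠ 0 := by rintro rfl; exact h0 hx
      obtain ⟨j, hj⟩ := Fin.exists_succ_eq.mpr hne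
      exact ⟨j, hj⟩

lemma FS_cons_cases {t : ℕ} (n₁ : ℤ) (n : Fin t → ℤ) {m : ℤ}
    (hm : m ∈ FS (Fin.cons n₁ n)) :
    m = n₁ ∨ m ∈ FS n ∨ ∃ m' ∈ FS n, m = n₁ + m' := by
  classical
  obtain ⟨I, hne, rfl⟩ := hm
  by_cases h0 : (0 : Fin (t+1)) ∈ I
  · have hsplit : ∑ i ∈ I, (Fin.cons n₁ n) i = n₁ + ∑ i ∈ I.erase 0, (Fin.cons n₁ n) i := by
      rw [← Finset.add_sum_erase _ _ h0]; simp
    obtain ⟨J, hJne, hJ⟩ := sum_succ_of_not_mem_zero n₁ n (I.erase 0)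
      (Finset.notMem_erase _ _)
    by_cases hI' : (I.erase 0).Nonempty
    · right; right
      exact ⟨∑ j ∈ J, n j, ⟨J, hJne hI', rfl⟩, by rw [hsplit, hJ]⟩
    · left
      rw [Finset.not_nonempty_iff_eq_empty] at hI'
      rw [hsplit, hI']
      simp
  · obtain ⟨J, hJne, hJ⟩ := sum_succ_of_not_mem_zero n₁ n I h0
    right; left
    exact ⟨J, hJne hne, hJ.symm ▸ rfl⟩

lemma existsM (c : ℝ≥0∞) (hc : 0 < c) : ∃ M : ℕ, 2 < (M : ℝ≥0∞) * c := by
  by_cases h : c = ⊤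
  · refine ⟨3, ?_⟩
    rw [h, ENNReal.mul_top (by norm_num)]
    exact lt_top_iff_ne_top.mpr (by norm_num)
  · have hfin : 2 / c ≠ ⊤ := (ENNReal.div_lt_top (by norm_num) hc.ne').ne
    obtain ⟨M, hM⟩ := ENNReal.exists_nat_gt hfin
    exact ⟨M, by rwa [ENNReal.div_lt_iff (Or.inl hc.ne') (Or.inl h)] at hM⟩

lemma rec_lemma {Y : Type*} [MeasurableSpace Y] (μ : Measure Y) [IsProbabilityMeasure μ]
    (T : Y ≃ᵐ Y) (hT : MeasurePreserving (⇑T) μ μ) (t : ℕ) :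
    ∀ c : ℝ≥0∞, 0 < c → ∃ K : ℕ, ∀ S : Set Y, MeasurableSet S → c ≤ μ S →
      ∀ (a : ℕ) (p : ℕ → ℤ), ∃ n : Fin t → ℤ,
        (∀ m ∈ FS n, ∃ U : Finset ℕ, U.Nonempty ∧ (∀ x ∈ U, a ≤ x ∧ x < a + K) ∧
          m = ∑ x ∈ U, p x) ∧
        0 < μ (S ∩ ⋂ m ∈ FS n, zIter T.toEquiv m ⁻¹' S) := by
  induction t with
  | zero =>
      intro c hc
      refine ⟨0, fun S hS hcS a p => ⟨fun i => i.elim0, ?_, ?_⟩⟩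
      · intro m hm; rw [FS_zero] at hm; exact absurd hm (Set.notMem_empty m)
      · have he : FS (fun i : Fin 0 => i.elim0) = ∅ := FS_zero _
        rw [he]
        simpa using lt_of_lt_of_le hc hcS
  | succ t ih =>
      intro c hc
      obtain ⟨M, hM⟩ := existsM c hc
      set N := M + 1 with hN
      have hc' : (0 : ℝ≥0∞) < ((N : ℝ≥0∞) * N)⁻¹ := by
        simp only [ENNReal.inv_pos]
        finiteness
      obtain ⟨K', hK'⟩ := ih ((N : ℝ≥0∞) * N)⁻¹ hc'
      refine ⟨M + K', fun S hS hcS a p => ?_⟩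
      -- the sets B j
      set q : Fin N → ℤ := fun j => ∑ x ∈ Finset.Ico a (a + (j : ℕ)), p x with hq
      set B : Fin N → Set Y := fun j => zIter T.toEquiv (q j) ⁻¹' S with hB
      have hBm : ∀ j, MeasurableSet (B j) := fun j => (zIter_measurable T (q j)) hS
      have hBc : ∀ j, c ≤ μ (B j) := by
        intro j
        rw [hB]
        rw [(zIter_mp T hT (q j)).measure_preimage hS.nullMeasurableSet]
        exact hcS
      have h2 : 2 < (N : ℝ≥0∞) * c := by
        refine lt_of_lt_of_le hM (mul_le_mul_left ?_ c)
        exact_mod_cast Nat.le_succ M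
      obtain ⟨i, j, hij, hμij⟩ := pair_lemma μ B hBm hBc h2
      set n₁ : ℤ := ∑ x ∈ Finset.Ico (a + (i : ℕ)) (a + (j : ℕ)), p x with hn₁
      have hij' : (i : ℕ) < (j : ℕ) := hij
      have hqj : q j = n₁ + q i := by
        rw [hq, hn₁]
        rw [add_comm]
        rw [Finset.sum_Ico_consecutive p (Nat.le_add_right a i)
          (Nat.add_le_add_left hij'.le a)]
      set S' : Set Y := S ∩ zIter T.toEquiv n₁ ⁻¹' S with hS'def
      have hS'm : MeasurableSet S' := hS.inter ((zIter_measurable T n₁) hS)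
      have hBij : B i ∩ B j = zIter T.toEquiv (q i) ⁻¹' S' := by
        have hj : B j = zIter T.toEquiv (q i) ⁻¹' (zIter T.toEquiv n₁ ⁻¹' S) := by
          show zIter T.toEquiv (q j) ⁻¹' S = _
          rw [hqj, zIter_add, Set.preimage_comp]
        rw [hS'def, Set.preimage_inter, ← hj]
      have hμS' : ((N : ℝ≥0∞) * N)⁻¹ ≤ μ S' := by
        rw [← (zIter_mp T hT (q i)).measure_preimage hS'm.nullMeasurableSet, ← hBij]
        exact hμij.le
      obtain ⟨n', hFS', hpos'⟩ := hK' S' hS'm hμS' (a + M) p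
      refine ⟨Fin.cons n₁ n', ?_, ?_⟩
      · -- interval invariant
        intro m hm
        have hjM : (j : ℕ) ≤ M := Nat.lt_succ_iff.mp j.isLt
        rcases FS_cons_cases n₁ n' hm with h | h | ⟨m', hm', h⟩
        · refine ⟨Finset.Ico (a + (i : ℕ)) (a + (j : ℕ)), ?_, ?_, by rw [h]⟩
          · rw [Finset.nonempty_Ico]; exact Nat.add_lt_add_left hij' a
          · intro x hx
            rw [Finset.mem_Ico] at hx
            constructor
            · exact le_trans (Nat.le_add_right a i) hx.1
            · calc x < a + (j : ℕ) := hx.2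
                _ ≤ a + (M + K') := Nat.add_le_add_left (le_trans hjM (Nat.le_add_right M K')) a
        · obtain ⟨U, hUne, hUb, hUs⟩ := hFS' m h
          refine ⟨U, hUne, ?_, hUs⟩
          intro x hx
          obtain ⟨h1, h2'⟩ := hUb x hx
          exact ⟨le_trans (Nat.le_add_right a M) h1, by omega⟩
        · obtain ⟨U, hUne, hUb, hUs⟩ := hFS' m' hm'
          have hdisj : Disjoint (Finset.Ico (a + (i : ℕ)) (a + (j : ℕ))) U := by
            rw [Finset.disjoint_left]
            intro x hx hxU
            rw [Finset.mem_Ico] at hx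
            have h1 : x < a + M := lt_of_lt_of_le hx.2 (Nat.add_le_add_left hjM a)
            exact absurd (hUb x hxU).1 (not_le.mpr h1)
          refine ⟨Finset.Ico (a + (i : ℕ)) (a + (j : ℕ)) ∪ U, ?_, ?_, ?_⟩
          · refine Finset.Nonempty.mono Finset.subset_union_left ?_
            rw [Finset.nonempty_Ico]; exact Nat.add_lt_add_left hij' a
          · intro x hx
            rcases Finset.mem_union.mp hx with hx | hx
            · rw [Finset.mem_Ico] at hx
              refine ⟨le_trans (Nat.le_add_right a i) hx.1, ?_⟩
              calc x < a + (j : ℕ) := hx.2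
                _ ≤ a + (M + K') := Nat.add_le_add_left (le_trans hjM (Nat.le_add_right M K')) a
            · obtain ⟨h1, h2'⟩ := hUb x hx
              exact ⟨le_trans (Nat.le_add_right a M) h1, by omega⟩
          · rw [Finset.sum_union hdisj, h, hn₁]
            rw [hUs]
      · -- measure positivity
        refine lt_of_lt_of_le hpos' (measure_mono ?_)
        intro x hx
        obtain ⟨hx1, hx2⟩ := hx
        have hx2' : ∀ m' ∈ FS n', zIter T.toEquiv m' x ∈ S' := by
          intro m' hm'
          exact Set.mem_iInter₂.mp hx2 m' hm'
        refine ⟨hx1.1, Set.mem_iInter₂.mpr ?_⟩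
        intro m hm
        rcases FS_cons_cases n₁ n' hm with h | h | ⟨m', hm', h⟩
        · rw [h]; exact hx1.2
        · exact (hx2' m h).1
        · have := (hx2' m' hm').2
          rw [h, zIter_add]
          exact this


/-- Sets containing finite IP-sets of arbitrarily long lengths are Poincaré
recurrence sets of every order; `F_{P_∞} = F_{fip}`. -/
theorem statement11 (A : Set ℤ) :
    (∀ d : ℕ, 1 ≤ d → ContainsArbLongFIP A → PoincareRecSet d A) ∧
    ((∀ d : ℕ, 1 ≤ d → PoincareRecSet d A) ↔ ContainsArbLongFIP A) := by
  classical
  have main : ∀ d : ℕ, ContainsArbLongFIP A → PoincareRecSet d A := by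
    intro d hA Y _ _ μ _ T hT A₀ hA₀ hpos
    obtain ⟨K, hK⟩ := rec_lemma μ T hT d (μ A₀) hpos
    obtain ⟨p, hp⟩ := hA (K + 1) (by omega)
    set p' : ℕ → ℤ := fun x => if h : x < K + 1 then p ⟨x, h⟩ else 0 with hp'
    obtain ⟨n, hFSn, hposn⟩ := hK A₀ hA₀ le_rfl 0 p'
    refine ⟨n, ?_, hposn⟩
    intro m hm
    obtain ⟨U, hUne, hUb, hUs⟩ := hFSn m hm
    apply hp
    have hUk : ∀ x ∈ U, x < K + 1 := fun x hx => by have := (hUb x hx).2; omega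
    set f : ℕ → Fin (K + 1) := fun x => if h : x < K + 1 then ⟨x, h⟩ else ⟨0, by omega⟩
      with hf
    have hinj : ∀ x ∈ U, ∀ y ∈ U, f x = f y → x = y := by
      intro x hx y hy hxy
      have hx' := hUk x hx
      have hy' := hUk y hy
      simpa [hf, hx', hy', Nat.le_of_lt_succ hx', Nat.le_of_lt_succ hy'] using congrArg Fin.val hxy
    refine ⟨U.image f, hUne.image f, ?_⟩
    rw [Finset.sum_image hinj, hUs]
    refine Finset.sum_congr rfl fun x hx => ?_
    have hx' := hUk x hx
    simp [hp', hf, hx', Nat.le_of_lt_succ hx']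
  refine ⟨fun d _ hA => main d hA, ⟨?_, fun hA d _ => main d hA⟩⟩
  intro h k hk
  have hT : MeasurePreserving (⇑(MeasurableEquiv.refl Unit)) (Measure.dirac ())
      (Measure.dirac ()) := by
    exact MeasurePreserving.id (Measure.dirac ())
  obtain ⟨n, hFS, -⟩ := h k hk Unit (Measure.dirac ()) (MeasurableEquiv.refl Unit) hT
    Set.univ MeasurableSet.univ (by simp)
  exact ⟨n, hFS⟩
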